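/- Let 1 ≤ ℓ < r be integers, and let t', p', ρ be integers with 0 ≤ t' ≤ ℓ, 0 ≤ p' ≤ ℓ, 0 ≤ ρ ≤ t'. Then Σ_{σ=0}^{t'−ρ} C(t',σ)(−1)^σ C(t'−σ, ρ) C(r−t'+σ, p'−ρ) equals 0 if p' < t', and equals (−1)^{t'−ρ} C(r−t', p'−t') C(t', ρ) if t' ≤ p' ≤ ℓ. -/

import Mathlib

lemma pascal_sum_aux (m : ℕ) (g : ℕ → ℝ) :
    ∑ σ ∈ Finset.range (m + 2), (-1 : ℝ) ^ σ * ((m + 1).choose σ : ℝ) * g σ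
      = ∑ σ ∈ Finset.range (m + 1), (-1 : ℝ) ^ σ * (m.choose σ : ℝ) * (g σ - g (σ + 1)) := by
  have h1 : ∑ σ ∈ Finset.range (m + 2), (-1 : ℝ) ^ σ * ((m + 1).choose σ : ℝ) * g σ
      = (∑ j ∈ Finset.range (m + 1),
          (-1 : ℝ) ^ (j + 1) * ((m + 1).choose (j + 1) : ℝ) * g (j + 1)) + g 0 := by
    rw [Finset.sum_range_succ' (fun σ => (-1 : ℝ) ^ σ * ((m + 1).choose σ : ℝ) * g σ) (m + 1)]
    simp
  have h2 : ∑ σ ∈ Finset.range (m + 1), (-1 : ℝ) ^ σ * (m.choose σ : ℝ) * g σ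
      = (∑ j ∈ Finset.range (m + 1),
          (-1 : ℝ) ^ (j + 1) * (m.choose (j + 1) : ℝ) * g (j + 1)) + g 0 := by
    have h3 : ∑ σ ∈ Finset.range (m + 2), (-1 : ℝ) ^ σ * (m.choose σ : ℝ) * g σ
        = ∑ σ ∈ Finset.range (m + 1), (-1 : ℝ) ^ σ * (m.choose σ : ℝ) * g σ := by
      rw [Finset.sum_range_succ]
      simp [Nat.choose_eq_zero_of_lt (Nat.lt_succ_self m)]
    rw [← h3,
      Finset.sum_range_succ' (fun σ => (-1 : ℝ) ^ σ * (m.choose σ : ℝ) * g σ) (m + 1)]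
    simp
  rw [h1]
  have h4 : ∀ j ∈ Finset.range (m + 1),
      (-1 : ℝ) ^ (j + 1) * ((m + 1).choose (j + 1) : ℝ) * g (j + 1)
        = (-1 : ℝ) ^ (j + 1) * (m.choose j : ℝ) * g (j + 1)
          + (-1 : ℝ) ^ (j + 1) * (m.choose (j + 1) : ℝ) * g (j + 1) := by
    intro j _
    rw [Nat.choose_succ_succ']
    push_cast
    ring
  rw [Finset.sum_congr rfl h4, Finset.sum_add_distrib]
  have h5 : ∑ σ ∈ Finset.range (m + 1), (-1 : ℝ) ^ σ * (m.choose σ : ℝ) * (g σ - g (σ + 1))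
      = (∑ σ ∈ Finset.range (m + 1), (-1 : ℝ) ^ σ * (m.choose σ : ℝ) * g σ)
        - ∑ σ ∈ Finset.range (m + 1), (-1 : ℝ) ^ σ * (m.choose σ : ℝ) * g (σ + 1) := by
    rw [← Finset.sum_sub_distrib]
    apply Finset.sum_congr rfl
    intro σ _
    ring
  rw [h5, h2]
  have h6 : ∀ j ∈ Finset.range (m + 1),
      (-1 : ℝ) ^ (j + 1) * (m.choose j : ℝ) * g (j + 1)
        = -((-1 : ℝ) ^ j * (m.choose j : ℝ) * g (j + 1)) := by
    intro j _; ring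
  rw [Finset.sum_congr rfl h6, Finset.sum_neg_distrib]
  ring

lemma key_sum (N : ℕ) : ∀ m k : ℕ,
    (∑ σ ∈ Finset.range (m + 1),
        (-1 : ℝ) ^ σ * (m.choose σ : ℝ) * ((N + σ).choose k : ℝ))
      = if k < m then 0 else (-1 : ℝ) ^ m * ((N).choose (k - m) : ℝ) := by
  intro m
  induction m with
  | zero =>
    intro k
    simp
  | succ m ih =>
    intro k
    rw [show m + 1 + 1 = m + 2 from rfl,
      pascal_sum_aux m (fun σ => ((N + σ).choose k : ℝ))]
    cases k with
    | zero =>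
      simp only [Nat.choose_zero_right, Nat.cast_one, sub_self, mul_zero,
        Finset.sum_const_zero]
      rw [if_pos (Nat.succ_pos m)]
    | succ k =>
      have hdiff : ∀ σ : ℕ, ((N + σ).choose (k + 1) : ℝ) - ((N + (σ + 1)).choose (k + 1) : ℝ)
          = -(((N + σ).choose k : ℝ)) := by
        intro σ
        have : (N + (σ + 1)).choose (k + 1) = (N + σ).choose k + (N + σ).choose (k + 1) := by
          rw [show N + (σ + 1) = (N + σ) + 1 from rfl, Nat.choose_succ_succ']
        rw [this]
        push_cast
        ring
      have : ∑ σ ∈ Finset.range (m + 1), (-1 : ℝ) ^ σ * (m.choose σ : ℝ) *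
            (((N + σ).choose (k + 1) : ℝ) - ((N + (σ + 1)).choose (k + 1) : ℝ))
          = -∑ σ ∈ Finset.range (m + 1),
              (-1 : ℝ) ^ σ * (m.choose σ : ℝ) * ((N + σ).choose k : ℝ) := by
        rw [← Finset.sum_neg_distrib]
        apply Finset.sum_congr rfl
        intro σ _
        rw [hdiff σ]
        ring
      rw [this, ih k]
      by_cases h : k < m
      · rw [if_pos h, if_pos (by omega)]
        simp
      · rw [if_neg h, if_neg (by omega)]
        have : k + 1 - (m + 1) = k - m := by omega
        rw [this]
        ring

/-- the alternating binomial sum identity of Claim `I_value`.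
Binomial coefficients with a negative lower index (which can only occur in
`C(r−t'+σ, p'−ρ)` when `p' < ρ`) are interpreted as `0`. -/
theorem alternating_binomial_identity (ℓ r t' p' ρ : ℕ)
    (h1 : 1 ≤ ℓ) (h2 : ℓ < r) (h3 : t' ≤ ℓ) (h4 : p' ≤ ℓ) (h5 : ρ ≤ t') :
    (∑ σ ∈ Finset.range (t' - ρ + 1),
        (t'.choose σ : ℝ) * (-1) ^ σ * ((t' - σ).choose ρ : ℝ) *
          (if ρ ≤ p' then ((r - t' + σ).choose (p' - ρ) : ℝ) else 0)) =
      if p' < t' then 0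
      else (-1 : ℝ) ^ (t' - ρ) * ((r - t').choose (p' - t') : ℝ) * (t'.choose ρ : ℝ) := by
  by_cases hρp : ρ ≤ p'
  · -- main case
    have hsum : ∀ σ ∈ Finset.range (t' - ρ + 1),
        (t'.choose σ : ℝ) * (-1) ^ σ * ((t' - σ).choose ρ : ℝ) *
            (if ρ ≤ p' then ((r - t' + σ).choose (p' - ρ) : ℝ) else 0)
          = (t'.choose ρ : ℝ) *
              ((-1 : ℝ) ^ σ * ((t' - ρ).choose σ : ℝ) * ((r - t' + σ).choose (p' - ρ) : ℝ)) := by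
      intro σ hσ
      rw [if_pos hρp]
      have hσle : σ ≤ t' - ρ := by
        simp only [Finset.mem_range] at hσ; omega
      have hprod : t'.choose σ * (t' - σ).choose ρ = t'.choose ρ * (t' - ρ).choose σ := by
        have hσt : σ ≤ t' := by omega
        have e1 : t'.choose σ = t'.choose (t' - σ) := (Nat.choose_symm hσt).symm
        have e2 : t'.choose (t' - σ) * (t' - σ).choose ρ
            = t'.choose ρ * (t' - ρ).choose (t' - σ - ρ) :=
          Nat.choose_mul (n := t') (by omega)
        have e3 : (t' - ρ).choose (t' - σ - ρ) = (t' - ρ).choose σ := by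
          have : t' - σ - ρ = (t' - ρ) - σ := by omega
          rw [this]
          exact Nat.choose_symm hσle
        rw [e1, e2, e3]
      have : (t'.choose σ : ℝ) * ((t' - σ).choose ρ : ℝ)
          = (t'.choose ρ : ℝ) * ((t' - ρ).choose σ : ℝ) := by
        exact_mod_cast congrArg (Nat.cast : ℕ → ℝ) hprod
      calc (t'.choose σ : ℝ) * (-1) ^ σ * ((t' - σ).choose ρ : ℝ) *
              ((r - t' + σ).choose (p' - ρ) : ℝ)
          = ((t'.choose σ : ℝ) * ((t' - σ).choose ρ : ℝ)) * ((-1) ^ σ *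
              ((r - t' + σ).choose (p' - ρ) : ℝ)) := by ring
        _ = ((t'.choose ρ : ℝ) * ((t' - ρ).choose σ : ℝ)) * ((-1) ^ σ *
              ((r - t' + σ).choose (p' - ρ) : ℝ)) := by rw [this]
        _ = (t'.choose ρ : ℝ) *
              ((-1 : ℝ) ^ σ * ((t' - ρ).choose σ : ℝ) * ((r - t' + σ).choose (p' - ρ) : ℝ)) := by
            ring
    rw [Finset.sum_congr rfl hsum, ← Finset.mul_sum, key_sum (r - t') (t' - ρ) (p' - ρ)]
    by_cases hpt : p' < t'
    · rw [if_pos (by omega), if_pos hpt]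
      ring
    · rw [if_neg (by omega), if_neg hpt]
      have : p' - ρ - (t' - ρ) = p' - t' := by omega
      rw [this]
      ring
  · -- ρ > p' : both sides zero
    have : ∀ σ ∈ Finset.range (t' - ρ + 1),
        (t'.choose σ : ℝ) * (-1) ^ σ * ((t' - σ).choose ρ : ℝ) *
            (if ρ ≤ p' then ((r - t' + σ).choose (p' - ρ) : ℝ) else 0) = 0 := by
      intro σ _
      rw [if_neg hρp, mul_zero]
    rw [Finset.sum_congr rfl this, Finset.sum_const_zero, if_pos (by omega)]
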